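/- (Uniqueness of purification up to a local unitary on the ancilla) Let B and A be nonempty finite types and let ψ, φ ∈ ℂ^{B×A} be unit vectors such that tr_A |ψ⟩⟨ψ| = tr_A |φ⟩⟨φ|. Then there exists a unitary matrix U on ℂ^A such that (1_B ⊗ U) ψ = φ. -/

import Mathlib

open Matrix
open scoped ComplexOrder Kronecker Classical

/-- Sum of the `d` largest eigenvalues (with multiplicity, decreasing order)
of a Hermitian matrix. -/
noncomputable def sumTopEigs {n : Type*} [Fintype n] [DecidableEq n]
    {A : Matrix n n ℂ} (hA : A.IsHermitian) (d : ℕ) : ℝ :=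
  ((((Finset.univ.val.map hA.eigenvalues).sort (· ≤ ·)).reverse.take d)).sum

/-- `ε^(d)(A) = 1 - Σ_{i=1}^d λ_i^↓(A)` for Hermitian `A` (junk value `0` otherwise). -/
noncomputable def epsD {n : Type*} [Fintype n] [DecidableEq n]
    (A : Matrix n n ℂ) (d : ℕ) : ℝ :=
  if h : A.IsHermitian then 1 - sumTopEigs h d else 0

/-- `|ψ⟩⟨ψ|`. -/
noncomputable def outer {n : Type*} (ψ : n → ℂ) : Matrix n n ℂ :=
  fun i j => ψ i * star (ψ j)

/-- Partial trace over the second tensor factor. -/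
noncomputable def ptraceR {S R : Type*} [Fintype R] (M : Matrix (S × R) (S × R) ℂ) :
    Matrix S S ℂ :=
  fun s s' => ∑ r, M (s, r) (s', r)

/-- Partial trace over the third tensor factor. -/
noncomputable def ptrace3 {S R A : Type*} [Fintype A] (M : Matrix (S × R × A) (S × R × A) ℂ) :
    Matrix (S × R) (S × R) ℂ :=
  fun p q => ∑ a, M (p.1, p.2, a) (q.1, q.2, a)

/-- Partial trace over the second (middle) tensor factor. -/
noncomputable def ptrace2 {S R A : Type*} [Fintype R] (M : Matrix (S × R × A) (S × R × A) ℂ) :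
    Matrix (S × A) (S × A) ℂ :=
  fun p q => ∑ r, M (p.1, r, p.2) (q.1, r, q.2)

/-- Partial trace over the second and third tensor factors. -/
noncomputable def ptrace23 {S R A : Type*} [Fintype R] [Fintype A]
    (M : Matrix (S × R × A) (S × R × A) ℂ) : Matrix S S ℂ :=
  fun s s' => ∑ r, ∑ a, M (s, r, a) (s', r, a)

/-- Convex-roof extension `E^(d)_{S|R}`: the infimum over all finite pure-state
convex decompositions `ρ = Σ_k p_k |ψ_k⟩⟨ψ_k|` of `Σ_k p_k ε^(d)(tr_R |ψ_k⟩⟨ψ_k|)`. -/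
noncomputable def convRoofE {S R : Type*} [Fintype S] [Fintype R] [DecidableEq S]
    (d : ℕ) (ρ : Matrix (S × R) (S × R) ℂ) : ℝ :=
  sInf { e : ℝ | ∃ (m : ℕ) (p : Fin m → ℝ) (ψ : Fin m → (S × R → ℂ)),
    (∀ k, 0 ≤ p k) ∧ (∑ k, p k = 1) ∧
    (∀ k, star (ψ k) ⬝ᵥ ψ k = 1) ∧
    (ρ = ∑ k, (p k : ℂ) • outer (ψ k)) ∧
    e = ∑ k, p k * epsD (ptraceR (outer (ψ k))) d }

/-- Classical correlations `C^(d)_{S|A}`: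
`ε^(d)(tr_A ρ)` minus the infimum over all POVMs `{M_x}` on `A` of
`Σ_x p_x ε^(d)(p_x⁻¹ tr_A((1_S ⊗ M_x) ρ))`, where `p_x = tr((1_S ⊗ M_x) ρ)`
and terms with `p_x = 0` are omitted. -/
noncomputable def classC {S A : Type*} [Fintype S] [Fintype A] [DecidableEq S] [DecidableEq A]
    (d : ℕ) (ρ : Matrix (S × A) (S × A) ℂ) : ℝ :=
  epsD (ptraceR ρ) d -
  sInf { e : ℝ | ∃ (m : ℕ) (M : Fin m → Matrix A A ℂ),
    (∀ x, (M x).PosSemidef) ∧ (∑ x, M x = 1) ∧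
    e = ∑ x,
      (if (((1 : Matrix S S ℂ) ⊗ₖ M x) * ρ).trace = 0 then 0
       else ((((1 : Matrix S S ℂ) ⊗ₖ M x) * ρ).trace).re *
         epsD (((((1 : Matrix S S ℂ) ⊗ₖ M x) * ρ).trace)⁻¹ •
           ptraceR (((1 : Matrix S S ℂ) ⊗ₖ M x) * ρ)) d) }

/-- Uniqueness of purification up to a local unitary on the ancilla:
if two unit vectors `ψ, φ ∈ ℂ^{B×A}` have the same reduced state on `B`, then
`φ = (1_B ⊗ U) ψ` for some unitary `U` on `ℂ^A`. -/

lemma toEuc_mul {l m n : Type*} [Fintype l] [Fintype m] [Fintype n] [DecidableEq m] [DecidableEq n]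
    (M : Matrix l m ℂ) (N : Matrix m n ℂ) :
    Matrix.toEuclideanLin (M * N) = (Matrix.toEuclideanLin M).comp (Matrix.toEuclideanLin N) := by
  apply LinearMap.ext; intro v
  simp [Matrix.toEuclideanLin_apply, Matrix.mulVec_mulVec]

-- key: X Xᴴ = Y Yᴴ implies Y = W X for some unitary... in the form W * X = Y
lemma exists_unitary_mul_eq {A B : Type*} [Fintype A] [Fintype B] [DecidableEq A] [DecidableEq B]
    (X Y : Matrix A B ℂ) (h : Xᴴ * X = Yᴴ * Y) :
    ∃ W : Matrix A A ℂ, W ∈ Matrix.unitaryGroup A ℂ ∧ W * X = Y := by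
  set T : EuclideanSpace ℂ B →ₗ[ℂ] EuclideanSpace ℂ A := Matrix.toEuclideanLin X
  set S : EuclideanSpace ℂ B →ₗ[ℂ] EuclideanSpace ℂ A := Matrix.toEuclideanLin Y
  have hadjT : LinearMap.adjoint T = Matrix.toEuclideanLin Xᴴ := by
    rw [Matrix.toEuclideanLin_conjTranspose_eq_adjoint]
  have hadjS : LinearMap.adjoint S = Matrix.toEuclideanLin Yᴴ := by
    rw [Matrix.toEuclideanLin_conjTranspose_eq_adjoint]
  have hinner : ∀ v, (inner ℂ (T v) (T v) : ℂ) = inner ℂ (S v) (S v) := by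
    intro v
    rw [← LinearMap.adjoint_inner_left T, ← LinearMap.adjoint_inner_left S,
      hadjT, hadjS]
    have h1 : Matrix.toEuclideanLin Xᴴ (T v) = Matrix.toEuclideanLin (Xᴴ * X) v := by
      rw [toEuc_mul]; rfl
    have h2 : Matrix.toEuclideanLin Yᴴ (S v) = Matrix.toEuclideanLin (Yᴴ * Y) v := by
      rw [toEuc_mul]; rfl
    rw [h1, h2, h]
  have hnorm : ∀ v, ‖T v‖ = ‖S v‖ := by
    intro v
    have := hinner v
    rw [inner_self_eq_norm_sq_to_K (𝕜 := ℂ), inner_self_eq_norm_sq_to_K (𝕜 := ℂ)] at this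
    have h2 : (‖T v‖ : ℝ) ^ 2 = ‖S v‖ ^ 2 := by exact_mod_cast this
    exact (sq_eq_sq₀ (norm_nonneg _) (norm_nonneg _)).mp h2
  have hker : LinearMap.ker T ≤ LinearMap.ker S := by
    intro v hv
    rw [LinearMap.mem_ker] at hv ⊢
    have := hnorm v
    rw [hv, norm_zero] at this
    exact norm_eq_zero.mp this.symm
  -- the isometry on the range of T
  set g : LinearMap.range T →ₗ[ℂ] EuclideanSpace ℂ A :=
    ((LinearMap.ker T).liftQ S hker).comp (T.quotKerEquivRange.symm.toLinearMap)
  have hg : ∀ v, g ⟨T v, LinearMap.mem_range_self T v⟩ = S v := by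
    intro v
    show ((LinearMap.ker T).liftQ S hker) (T.quotKerEquivRange.symm ⟨T v, _⟩) = S v
    rw [T.quotKerEquivRange_symm_apply_image v]
    rfl
  have hgnorm : ∀ x : LinearMap.range T, ‖g x‖ = ‖x‖ := by
    rintro ⟨y, hy⟩
    obtain ⟨v, rfl⟩ := hy
    rw [hg v]
    rw [← hnorm v]
    rfl
  set L : LinearMap.range T →ₗᵢ[ℂ] EuclideanSpace ℂ A := ⟨g, hgnorm⟩
  set Wli := L.extend
  have hW : ∀ v, Wli (T v) = S v := by
    intro v
    have := L.extend_apply ⟨T v, LinearMap.mem_range_self T v⟩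
    rw [this]
    exact hg v
  set Wm : Matrix A A ℂ := Matrix.toEuclideanLin.symm Wli.toLinearMap
  have hWm : Matrix.toEuclideanLin Wm = Wli.toLinearMap := Matrix.toEuclideanLin.apply_symm_apply _
  have hadj : (LinearMap.adjoint Wli.toLinearMap).comp Wli.toLinearMap = LinearMap.id := by
    apply LinearMap.ext; intro x
    apply ext_inner_left ℂ
    intro y
    simp only [LinearMap.comp_apply, LinearMap.id_apply, LinearMap.adjoint_inner_right,
      LinearIsometry.coe_toLinearMap]
    exact Wli.inner_map_map y x
  have hunit : Wmᴴ * Wm = 1 := by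
    apply Matrix.toEuclideanLin.injective
    rw [toEuc_mul, Matrix.toEuclideanLin_conjTranspose_eq_adjoint, hWm, hadj]
    apply LinearMap.ext; intro v
    simp [Matrix.toEuclideanLin_apply]
  refine ⟨Wm, ?_, ?_⟩
  · rw [Matrix.mem_unitaryGroup_iff]
    have := mul_eq_one_comm.mpr hunit
    exact this
  · apply Matrix.toEuclideanLin.injective
    rw [toEuc_mul, hWm]
    apply LinearMap.ext; intro v
    exact hW v

theorem stmt5' {B A : Type*} [Fintype B] [Fintype A] [DecidableEq B] [DecidableEq A]
    [Nonempty B] [Nonempty A]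
    (ψ φ : B × A → ℂ)
    (h : (fun s s' => ∑ r, (fun i j => ψ i * star (ψ j)) (s, r) (s', r))
       = (fun s s' => ∑ r : A, φ (s,r) * star (φ (s', r)) : Matrix B B ℂ)) :
    ∃ U : Matrix A A ℂ, U ∈ Matrix.unitaryGroup A ℂ ∧
      ((1 : Matrix B B ℂ) ⊗ₖ U) *ᵥ ψ = φ := by
  set X : Matrix A B ℂ := Matrix.of (fun a b => star (ψ (b, a)))
  set Y : Matrix A B ℂ := Matrix.of (fun a b => star (φ (b, a)))
  have hXY : Xᴴ * X = Yᴴ * Y := by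
    ext b b'
    have := congrFun (congrFun h b) b'
    simp only [Matrix.mul_apply, Matrix.conjTranspose_apply, Matrix.of_apply, X, Y, star_star]
    simpa using this
  obtain ⟨W, hWu, hWX⟩ := exists_unitary_mul_eq X Y hXY
  refine ⟨(Wᴴ)ᵀ, ?_, ?_⟩
  · rw [Matrix.mem_unitaryGroup_iff]
    have h1 : W * Wᴴ = 1 := by
      rw [Matrix.mem_unitaryGroup_iff'] at hWu
      exact mul_eq_one_comm.mpr hWu
    calc (Wᴴ)ᵀ * star ((Wᴴ)ᵀ) = (Wᴴ)ᵀ * Wᵀ := by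
          congr 1
          ext i j
          simp [Matrix.conjTranspose_apply, Matrix.transpose_apply]
      _ = (W * Wᴴ)ᵀ := by rw [← Matrix.transpose_mul]
      _ = 1 := by rw [h1, Matrix.transpose_one]
  · funext p
    obtain ⟨b, a⟩ := p
    have hentry := congrFun (congrFun hWX a) b
    simp only [Matrix.mul_apply, Matrix.of_apply, X, Y] at hentry
    have := congrArg star hentry
    simp only [star_sum, star_mul', star_star] at this
    rw [Matrix.mulVec]
    show (fun j => ((1 : Matrix B B ℂ) ⊗ₖ (Wᴴ)ᵀ) (b, a) j) ⬝ᵥ ψ = φ (b, a)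
    rw [dotProduct]
    rw [Fintype.sum_prod_type]
    calc ∑ b' : B, ∑ a' : A, ((1 : Matrix B B ℂ) ⊗ₖ (Wᴴ)ᵀ) (b, a) (b', a') * ψ (b', a')
        = ∑ b' : B, ∑ a' : A, ((1 : Matrix B B ℂ) b b') * ((Wᴴ)ᵀ a a' * ψ (b', a')) := by
          apply Finset.sum_congr rfl; intro b' _
          apply Finset.sum_congr rfl; intro a' _
          simp [Matrix.kroneckerMap_apply, mul_assoc]
      _ = ∑ a' : A, (Wᴴ)ᵀ a a' * ψ (b, a') := by
          rw [Finset.sum_comm]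
          simp [Matrix.one_apply, Finset.mul_sum]
      _ = φ (b, a) := by
          simp only [Matrix.transpose_apply, Matrix.conjTranspose_apply]
          simpa using this


theorem stmt5 {B A : Type*} [Fintype B] [Fintype A] [DecidableEq B] [DecidableEq A]
    [Nonempty B] [Nonempty A]
    (ψ φ : B × A → ℂ) (hψ : star ψ ⬝ᵥ ψ = 1) (hφ : star φ ⬝ᵥ φ = 1)
    (h : ptraceR (outer ψ) = ptraceR (outer φ)) :
    ∃ U : Matrix A A ℂ, U ∈ Matrix.unitaryGroup A ℂ ∧
      ((1 : Matrix B B ℂ) ⊗ₖ U) *ᵥ ψ = φ := by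
  apply stmt5' ψ φ
  exact h
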